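/- Restricted type implies strong type above the critical exponent: suppose T is a sublinear operator such that for all measurable sets E, F of finite measure with |E| ≥ 9|F| one has |⟨T 1_E, 1_F⟩| ≤ C |F| (1 + log(|E|/|F|)), and T maps L² to weak L² with norm C. Then for every p > 2 and every set E, |{|T 1_E| > λ}| ≤ C_p λ^{−p} |E| for all λ > 1. -/

import Mathlib

open MeasureTheory
open scoped ENNReal

lemma line_null (t : ℝ) : volume {p : ℝ × ℝ | p.1 = t} = 0 := by
  have h : {p : ℝ × ℝ | p.1 = t} = ({t} : Set ℝ) ×ˢ (Set.univ : Set ℝ) := by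
    ext p
    simp only [Set.mem_setOf_eq, Set.mem_prod, Set.mem_singleton_iff, Set.mem_univ, and_true]
  rw [h, Measure.volume_eq_prod, Measure.prod_prod]
  simp

lemma exists_pinched_subset {S : Set (ℝ × ℝ)} (hS : MeasurableSet S) (hfin : volume S < ⊤)
    {c : ℝ≥0∞} (hc0 : 0 < c) (hcS : c < volume S) :
    ∃ F, F ⊆ S ∧ MeasurableSet F ∧ volume F = c := by
  set g : ℝ → ℝ≥0∞ := fun t => volume (S ∩ {p | p.1 < t}) with hg
  have hsub : ∀ a b : ℝ, a ≤ b → S ∩ {p : ℝ × ℝ | p.1 < a} ⊆ S ∩ {p : ℝ × ℝ | p.1 < b} := by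
    intro a b hab x hx
    exact ⟨hx.1, lt_of_lt_of_le hx.2 hab⟩
  have gmono : Monotone g := fun a b hab => measure_mono (hsub a b hab)
  set A : Set ℝ := {t | g t ≤ c} with hA
  have gfin : ∀ t, g t ≠ ⊤ := fun t =>
    (lt_of_le_of_lt (measure_mono Set.inter_subset_left) hfin).ne
  have hmeas' : ∀ t : ℝ, MeasurableSet (S ∩ {p : ℝ × ℝ | p.1 < t}) := fun t =>
    hS.inter (measurableSet_lt measurable_fst measurable_const)
  -- A is nonempty
  have hAne : A.Nonempty := by
    have h1 : (⋂ k : ℕ, (S ∩ {p : ℝ × ℝ | p.1 < -(k : ℝ)})) = ∅ := by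
      ext x
      simp only [Set.mem_iInter, Set.mem_empty_iff_false, iff_false, not_forall]
      obtain ⟨k, hk⟩ := exists_nat_gt (-x.1)
      refine ⟨k, fun h => ?_⟩
      have := h.2
      simp only [Set.mem_setOf_eq] at this
      linarith
    have h2 : (⨅ k : ℕ, g (-(k : ℝ))) = 0 := by
      have := Directed.measure_iInter (μ := volume)
        (s := fun k : ℕ => S ∩ {p : ℝ × ℝ | p.1 < -(k : ℝ)})
        (fun k => (hmeas' _).nullMeasurableSet)
        (fun i j => ⟨max i j,
          hsub _ _ (by simp [neg_le_neg_iff, Nat.cast_le, le_max_left]),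
          hsub _ _ (by simp [neg_le_neg_iff, Nat.cast_le, le_max_right])⟩)
        ⟨0, gfin _⟩
      rw [h1] at this
      simpa using this.symm
    have hex : ∃ k : ℕ, g (-(k : ℝ)) < c := by
      by_contra hcon
      push_neg at hcon
      exact absurd (le_iInf hcon) (by rw [h2]; exact hc0.not_ge)
    obtain ⟨k, hk⟩ := hex
    exact ⟨-(k : ℝ), hk.le⟩
  -- A is bounded above
  have hAbdd : BddAbove A := by
    have h1 : (⋃ k : ℕ, (S ∩ {p : ℝ × ℝ | p.1 < (k : ℝ)})) = S := by
      ext x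
      simp only [Set.mem_iUnion]
      constructor
      · rintro ⟨k, hk⟩; exact hk.1
      · intro hx
        obtain ⟨k, hk⟩ := exists_nat_gt x.1
        exact ⟨k, hx, hk⟩
    have h2 : (⨆ k : ℕ, g (k : ℝ)) = volume S := by
      have := Directed.measure_iUnion (μ := volume)
        (s := fun k : ℕ => S ∩ {p : ℝ × ℝ | p.1 < (k : ℝ)})
        (fun i j => ⟨max i j,
          hsub _ _ (by simp [Nat.cast_le, le_max_left]),
          hsub _ _ (by simp [Nat.cast_le, le_max_right])⟩)
      rw [h1] at this
      exact this.symm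
    have hex : ∃ k : ℕ, c < g (k : ℝ) := by
      by_contra hcon
      push_neg at hcon
      exact absurd (iSup_le hcon) (by rw [h2]; exact hcS.not_ge)
    obtain ⟨k, hk⟩ := hex
    refine ⟨(k : ℝ), fun t ht => ?_⟩
    by_contra hlt
    push_neg at hlt
    exact absurd (le_trans (gmono hlt.le) ht) hk.not_ge
  set t₀ := sSup A with ht₀
  -- g t₀ ≤ c by left continuity
  have hgt₀ : g t₀ ≤ c := by
    have h1 : (⋃ k : ℕ, (S ∩ {p : ℝ × ℝ | p.1 < t₀ - 1 / (k + 1)})) =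
        S ∩ {p : ℝ × ℝ | p.1 < t₀} := by
      ext x
      simp only [Set.mem_iUnion, Set.mem_inter_iff, Set.mem_setOf_eq]
      constructor
      · rintro ⟨k, hx, hk⟩
        have : (0:ℝ) < 1 / ((k:ℝ) + 1) := by positivity
        exact ⟨hx, by linarith⟩
      · rintro ⟨hx, hlt⟩
        obtain ⟨k, hk⟩ := exists_nat_one_div_lt (show (0:ℝ) < t₀ - x.1 by linarith)
        exact ⟨k, hx, by linarith⟩
    have hstep : ∀ i j : ℕ, i ≤ j → t₀ - 1 / ((i:ℝ) + 1) ≤ t₀ - 1 / ((j:ℝ) + 1) := by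
      intro i j hij
      have : (1:ℝ) / ((j:ℝ) + 1) ≤ 1 / ((i:ℝ) + 1) := by
        apply one_div_le_one_div_of_le
        · positivity
        · have hc' := (Nat.cast_le (α := ℝ)).2 hij; linarith
      linarith
    have h2 := Directed.measure_iUnion (μ := volume)
      (s := fun k : ℕ => S ∩ {p : ℝ × ℝ | p.1 < t₀ - 1 / (k + 1)})
      (fun i j => ⟨max i j,
        hsub _ _ (hstep _ _ (le_max_left i j)),
        hsub _ _ (hstep _ _ (le_max_right i j))⟩)
    rw [h1] at h2
    rw [show g t₀ = volume (S ∩ {p : ℝ × ℝ | p.1 < t₀}) from rfl, h2]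
    refine iSup_le fun k => ?_
    have hlt : t₀ - 1 / ((k : ℝ) + 1) < t₀ := by
      have : (0:ℝ) < 1 / ((k:ℝ)+1) := by positivity
      linarith
    obtain ⟨a, haA, hta⟩ := exists_lt_of_lt_csSup hAne hlt
    exact le_trans (gmono hta.le) haA
  -- the final set
  refine ⟨S ∩ {p : ℝ × ℝ | p.1 ≤ t₀}, Set.inter_subset_left,
    hS.inter (measurableSet_le measurable_fst measurable_const), le_antisymm ?_ ?_⟩
  · -- upper bound
    have hsplit : S ∩ {p : ℝ × ℝ | p.1 ≤ t₀} ⊆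
        (S ∩ {p : ℝ × ℝ | p.1 < t₀}) ∪ {p : ℝ × ℝ | p.1 = t₀} := by
      rintro x ⟨hx, hle⟩
      rcases lt_or_eq_of_le (show x.1 ≤ t₀ from hle) with h | h
      · exact Or.inl ⟨hx, h⟩
      · exact Or.inr h
    calc volume (S ∩ {p : ℝ × ℝ | p.1 ≤ t₀})
        ≤ volume ((S ∩ {p : ℝ × ℝ | p.1 < t₀}) ∪ {p : ℝ × ℝ | p.1 = t₀}) :=
          measure_mono hsplit
      _ ≤ volume (S ∩ {p : ℝ × ℝ | p.1 < t₀}) + volume {p : ℝ × ℝ | p.1 = t₀} :=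
          measure_union_le _ _
      _ = g t₀ := by rw [line_null]; simp [hg]
      _ ≤ c := hgt₀
  · -- lower bound
    have h1 : (⋂ k : ℕ, (S ∩ {p : ℝ × ℝ | p.1 < t₀ + 1 / (k + 1)})) =
        S ∩ {p : ℝ × ℝ | p.1 ≤ t₀} := by
      ext x
      simp only [Set.mem_iInter, Set.mem_inter_iff, Set.mem_setOf_eq]
      constructor
      · intro h
        refine ⟨(h 0).1, ?_⟩
        by_contra hlt
        push_neg at hlt
        obtain ⟨k, hk⟩ := exists_nat_one_div_lt (show (0:ℝ) < x.1 - t₀ by linarith)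
        have := (h k).2
        linarith
      · rintro ⟨hx, hle⟩ k
        refine ⟨hx, ?_⟩
        have : (0:ℝ) < 1 / ((k:ℝ)+1) := by positivity
        linarith
    have hstep : ∀ i j : ℕ, i ≤ j → t₀ + 1 / ((j:ℝ) + 1) ≤ t₀ + 1 / ((i:ℝ) + 1) := by
      intro i j hij
      have : (1:ℝ) / ((j:ℝ) + 1) ≤ 1 / ((i:ℝ) + 1) := by
        apply one_div_le_one_div_of_le
        · positivity
        · have hc' := (Nat.cast_le (α := ℝ)).2 hij; linarith
      linarith
    have h2 := Directed.measure_iInter (μ := volume)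
      (s := fun k : ℕ => S ∩ {p : ℝ × ℝ | p.1 < t₀ + 1 / (k + 1)})
      (fun k => (hmeas' _).nullMeasurableSet)
      (fun i j => ⟨max i j,
        hsub _ _ (hstep _ _ (le_max_left i j)),
        hsub _ _ (hstep _ _ (le_max_right i j))⟩)
      ⟨0, gfin _⟩
    rw [h1] at h2
    rw [h2]
    refine le_iInf fun k => ?_
    have hnotA : t₀ + 1 / ((k:ℝ) + 1) ∉ A := by
      intro hmem
      have hle : t₀ + 1 / ((k:ℝ)+1) ≤ t₀ := le_csSup hAbdd hmem
      have hp : (0:ℝ) < 1 / ((k:ℝ)+1) := by positivity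
      linarith
    have : ¬ g (t₀ + 1 / ((k:ℝ)+1)) ≤ c := hnotA
    exact (not_le.mp this).le

lemma pos_bound (T : Set (ℝ × ℝ) → (ℝ × ℝ) → ℝ) (C : ℝ) (hC : 0 < C)
    (hmeas : ∀ E : Set (ℝ × ℝ), MeasurableSet E → Measurable (T E))
    (hbilin : ∀ E F : Set (ℝ × ℝ), MeasurableSet E → MeasurableSet F →
      volume E < ⊤ → volume F < ⊤ → 9 * volume F ≤ volume E →
      |∫ x in F, T E x| ≤
        C * (volume F).toReal *
          (1 + Real.log ((volume E).toReal / (volume F).toReal)))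
    (E : Set (ℝ × ℝ)) (hE : MeasurableSet E) (hEfin : volume E < ⊤) (hEpos : 0 < volume E)
    (lam : ℝ) (hlam : C * (1 + Real.log 18) < lam)
    (hGfin : volume {x | lam < T E x} < ⊤) :
    volume {x | lam < T E x} ≤ ENNReal.ofReal (Real.exp (1 - lam / C)) * volume E := by
  have hlog18 : 0 < Real.log 18 := Real.log_pos (by norm_num)
  have hlam0 : 0 < lam := lt_trans (by positivity) hlam
  have hTmeas := hmeas E hE
  set G : Set (ℝ × ℝ) := {x | lam < T E x} with hG
  have hGmeas : MeasurableSet G := measurableSet_lt measurable_const hTmeas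
  set S : ℕ → Set (ℝ × ℝ) := fun n => {x | lam < T E x ∧ T E x ≤ n} with hS
  have hSmeas : ∀ n, MeasurableSet (S n) :=
    fun n => (measurableSet_lt measurable_const hTmeas).inter
      (measurableSet_le hTmeas measurable_const)
  have hSsubG : ∀ n, S n ⊆ G := fun n x hx => hx.1
  have hSfin : ∀ n, volume (S n) < ⊤ := fun n => lt_of_le_of_lt (measure_mono (hSsubG n)) hGfin
  have hSmono : ∀ i j : ℕ, i ≤ j → S i ⊆ S j := by
    intro i j hij x hx
    exact ⟨hx.1, hx.2.trans (by exact_mod_cast Nat.cast_le.2 hij)⟩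
  have hUnion : (⋃ n, S n) = G := by
    ext x
    simp only [Set.mem_iUnion, hS, Set.mem_setOf_eq, hG]
    constructor
    · rintro ⟨n, h, _⟩; exact h
    · intro h
      exact ⟨⌈T E x⌉₊, h, Nat.le_ceil _⟩
  have hsup := Directed.measure_iUnion (μ := volume) (s := S)
    (fun i j => ⟨max i j, hSmono _ _ (le_max_left i j), hSmono _ _ (le_max_right i j)⟩)
  rw [hUnion] at hsup
  rw [hsup]
  refine iSup_le fun n => ?_
  -- key estimate for a measurable F ⊆ S n with finite measure and 9 μF ≤ μE :
  -- lam * μF.toReal ≤ C * μF.toReal * (1 + log (μE.toReal / μF.toReal))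
  have hkey : ∀ F : Set (ℝ × ℝ), F ⊆ S n → MeasurableSet F → 9 * volume F ≤ volume E →
      lam * (volume F).toReal ≤
        C * (volume F).toReal *
          (1 + Real.log ((volume E).toReal / (volume F).toReal)) := by
    intro F hFS hFmeas h9
    have hFfin : volume F < ⊤ := lt_of_le_of_lt (measure_mono (hFS.trans (hSsubG n))) hGfin
    have hint : IntegrableOn (T E) F volume := by
      refine Integrable.mono' (g := fun _ => (n : ℝ))
        (integrableOn_const hFfin.ne) hTmeas.aestronglyMeasurable.restrict ?_
      refine (ae_restrict_iff' hFmeas).2 (Filter.Eventually.of_forall fun x hx => ?_)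
      have h1 := (hFS hx).1
      have h2 := (hFS hx).2
      rw [Real.norm_eq_abs, abs_le]
      constructor <;> [linarith; exact h2]
    have hlow : lam * (volume F).toReal ≤ ∫ x in F, T E x :=
      setIntegral_ge_of_const_le_real hFmeas hFfin.ne (fun x hx => ((hFS hx).1).le) hint
    have := hbilin E F hE hFmeas hEfin hFfin h9
    calc lam * (volume F).toReal ≤ ∫ x in F, T E x := hlow
      _ ≤ |∫ x in F, T E x| := le_abs_self _
      _ ≤ _ := this
  -- first show 9 * volume (S n) ≤ volume E
  have hsmall : 9 * volume (S n) ≤ volume E := by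
    by_contra hbig
    push_neg at hbig
    have hc0 : (0 : ℝ≥0∞) < volume E / 18 :=
      ENNReal.div_pos hEpos.ne' (by norm_num)
    have hcS : volume E / 18 < volume (S n) := by
      rw [ENNReal.div_lt_iff (Or.inl (by norm_num)) (Or.inl (by norm_num))]
      calc volume E < 9 * volume (S n) := hbig
        _ ≤ volume (S n) * 18 := by rw [mul_comm]; gcongr <;> norm_num
    obtain ⟨F, hFS, hFmeas, hFvol⟩ := exists_pinched_subset (hSmeas n) (hSfin n) hc0 hcS
    have hEtop : volume E ≠ ⊤ := hEfin.ne
    have h9 : 9 * volume F ≤ volume E := by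
      rw [hFvol]
      calc (9:ℝ≥0∞) * (volume E / 18) ≤ 18 * (volume E / 18) := by gcongr <;> norm_num
        _ = volume E := ENNReal.mul_div_cancel' (by norm_num) (by norm_num)
    have hkey' := hkey F hFS hFmeas h9
    have hEt : (0:ℝ) < (volume E).toReal := ENNReal.toReal_pos hEpos.ne' hEtop
    have hFt : (volume F).toReal = (volume E).toReal / 18 := by
      rw [hFvol, ENNReal.toReal_div]
      norm_num
    have hFtpos : (0:ℝ) < (volume F).toReal := by rw [hFt]; positivity
    have hratio : (volume E).toReal / (volume F).toReal = 18 := by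
      rw [hFt]; field_simp
    rw [hratio] at hkey'
    nlinarith
  -- now the direct estimate with F = S n
  rcases eq_or_ne (volume (S n)) 0 with hz | hz
  · rw [hz]; exact zero_le
  have hkey' := hkey (S n) subset_rfl (hSmeas n) hsmall
  have hFtpos : (0:ℝ) < (volume (S n)).toReal := ENNReal.toReal_pos hz (hSfin n).ne
  have hEt : (0:ℝ) < (volume E).toReal := ENNReal.toReal_pos hEpos.ne' hEfin.ne
  set r : ℝ := (volume E).toReal / (volume (S n)).toReal with hr
  have hrpos : 0 < r := by positivity
  have hlamle : lam ≤ C * (1 + Real.log r) := by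
    have := hkey'
    nlinarith
  have hlogr : lam / C - 1 ≤ Real.log r := by
    rw [div_sub_one hC.ne', div_le_iff₀ hC]
    nlinarith
  have hrge : Real.exp (lam / C - 1) ≤ r := by
    calc Real.exp (lam / C - 1) ≤ Real.exp (Real.log r) := Real.exp_le_exp.2 hlogr
      _ = r := Real.exp_log hrpos
  have hbound : (volume (S n)).toReal ≤ Real.exp (1 - lam / C) * (volume E).toReal := by
    have h1 : (volume (S n)).toReal * Real.exp (lam / C - 1) ≤ (volume E).toReal := by
      calc (volume (S n)).toReal * Real.exp (lam / C - 1)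
          ≤ (volume (S n)).toReal * r := by gcongr
        _ = (volume E).toReal := by rw [hr]; field_simp
    have hepos : 0 < Real.exp (lam / C - 1) := Real.exp_pos _
    rw [show (1 : ℝ) - lam / C = -(lam / C - 1) by ring, Real.exp_neg]
    rw [← le_div_iff₀ hepos] at h1
    calc (volume (S n)).toReal ≤ (volume E).toReal / Real.exp (lam / C - 1) := h1
      _ = (Real.exp (lam / C - 1))⁻¹ * (volume E).toReal := by ring
  calc volume (S n) = ENNReal.ofReal (volume (S n)).toReal :=
        (ENNReal.ofReal_toReal (hSfin n).ne).symm
    _ ≤ ENNReal.ofReal (Real.exp (1 - lam / C) * (volume E).toReal) :=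
        ENNReal.ofReal_le_ofReal hbound
    _ = ENNReal.ofReal (Real.exp (1 - lam / C)) * ENNReal.ofReal (volume E).toReal :=
        ENNReal.ofReal_mul (Real.exp_pos _).le
    _ = ENNReal.ofReal (Real.exp (1 - lam / C)) * volume E := by
        rw [ENNReal.ofReal_toReal hEfin.ne]

/-- Restricted type implies strong type above the critical exponent: if `T` (acting on
indicators of sets) satisfies the bilinear logarithmic bound
`|⟨T 1_E, 1_F⟩| ≤ C |F| (1 + log(|E|/|F|))` whenever `|E| ≥ 9 |F|`, and `T` maps `L²`
into weak `L²` with norm `C`, then for every `p > 2`,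
`|{|T 1_E| > λ}| ≤ C_p λ^{-p} |E|` for all `λ > 1`. -/
theorem restricted_type_implies_strong_type
    (T : Set (ℝ × ℝ) → (ℝ × ℝ) → ℝ) (C : ℝ) (hC : 0 < C)
    (hmeas : ∀ E : Set (ℝ × ℝ), MeasurableSet E → Measurable (T E))
    (hbilin : ∀ E F : Set (ℝ × ℝ), MeasurableSet E → MeasurableSet F →
      volume E < ⊤ → volume F < ⊤ → 9 * volume F ≤ volume E →
      |∫ x in F, T E x| ≤
        C * (volume F).toReal *
          (1 + Real.log ((volume E).toReal / (volume F).toReal)))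
    (hweak : ∀ E : Set (ℝ × ℝ), MeasurableSet E → volume E < ⊤ → ∀ lam : ℝ, 0 < lam →
      volume {x | lam < |T E x|} ≤ ENNReal.ofReal (C ^ 2 * (volume E).toReal / lam ^ 2)) :
    ∀ p : ℝ, 2 < p → ∃ Cp : ℝ, 0 < Cp ∧
      ∀ E : Set (ℝ × ℝ), MeasurableSet E → volume E < ⊤ → ∀ lam : ℝ, 1 < lam →
        volume {x | lam < |T E x|} ≤ ENNReal.ofReal (Cp * lam ^ (-p)) * volume E := by
  intro p hp
  set m : ℕ := ⌈p⌉₊ with hm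
  have hpm : p ≤ (m : ℝ) := Nat.le_ceil p
  have hm0 : 0 < (m : ℕ) := by
    have : (0:ℝ) < p := by linarith
    exact Nat.ceil_pos.2 this
  set C' : ℝ := max C 1 with hC'
  have hC'1 : (1:ℝ) ≤ C' := le_max_right _ _
  have hlog18 : 0 < Real.log 18 := Real.log_pos (by norm_num)
  set lam₀ : ℝ := C * (1 + Real.log 18) with hlam₀
  have hlam₀pos : 0 < lam₀ := by positivity
  set Cp : ℝ := C ^ 2 * lam₀ ^ p + 2 * Real.exp 1 * ((m : ℝ) * C') ^ m + 1 with hCp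
  have hCppos : 0 < Cp := by
    have h1 : (0:ℝ) < lam₀ ^ p := Real.rpow_pos_of_pos hlam₀pos p
    have h2 : (0:ℝ) < ((m : ℝ) * C') ^ m := by positivity
    positivity
  refine ⟨Cp, hCppos, ?_⟩
  intro E hE hEfin lam hlam
  have hlam0 : (0:ℝ) < lam := by linarith
  have hlamp : (0:ℝ) < lam ^ (-p) := Real.rpow_pos_of_pos hlam0 _
  rcases eq_or_lt_of_le (show (0:ℝ≥0∞) ≤ volume E from zero_le) with hE0 | hEpos
  · -- measure zero case
    have := hweak E hE hEfin lam hlam0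
    rw [← hE0] at this ⊢
    simpa using this
  rcases le_or_gt lam lam₀ with hcase | hcase
  · -- small lam: use the weak (2,2) bound
    have hW := hweak E hE hEfin lam hlam0
    have hreal : C ^ 2 * (volume E).toReal / lam ^ 2 ≤
        Cp * lam ^ (-p) * (volume E).toReal := by
      have hEt : (0:ℝ) ≤ (volume E).toReal := ENNReal.toReal_nonneg
      have h1 : C ^ 2 * (volume E).toReal / lam ^ 2 ≤ C ^ 2 * (volume E).toReal := by
        apply div_le_self (by positivity)
        nlinarith
      have h2 : C ^ 2 ≤ Cp * lam ^ (-p) := by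
        have hle : lam ^ p ≤ lam₀ ^ p :=
          Real.rpow_le_rpow hlam0.le hcase (by linarith)
        have hpinv : lam ^ (-p) = (lam ^ p)⁻¹ := Real.rpow_neg hlam0.le p
        have hppos : (0:ℝ) < lam ^ p := Real.rpow_pos_of_pos hlam0 _
        have h6 : (1:ℝ) ≤ lam₀ ^ p * (lam ^ p)⁻¹ := by
          rw [← div_eq_mul_inv]
          exact (one_le_div hppos).2 hle
        have h3 : C ^ 2 ≤ C ^ 2 * lam₀ ^ p * (lam ^ p)⁻¹ := by
          calc C ^ 2 = C ^ 2 * 1 := (mul_one _).symm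
            _ ≤ C ^ 2 * (lam₀ ^ p * (lam ^ p)⁻¹) :=
                mul_le_mul_of_nonneg_left h6 (sq_nonneg C)
            _ = C ^ 2 * lam₀ ^ p * (lam ^ p)⁻¹ := by ring
        calc C ^ 2 ≤ C ^ 2 * lam₀ ^ p * (lam ^ p)⁻¹ := h3
          _ ≤ Cp * (lam ^ p)⁻¹ := by
              gcongr
              have h4 : (0:ℝ) < ((m : ℝ) * C') ^ m := by positivity
              have h5 : (0:ℝ) < Real.exp 1 := Real.exp_pos 1
              nlinarith
          _ = Cp * lam ^ (-p) := by rw [hpinv]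
      calc C ^ 2 * (volume E).toReal / lam ^ 2 ≤ C ^ 2 * (volume E).toReal := h1
        _ ≤ Cp * lam ^ (-p) * (volume E).toReal := by gcongr
    calc volume {x | lam < |T E x|} ≤ ENNReal.ofReal (C ^ 2 * (volume E).toReal / lam ^ 2) := hW
      _ ≤ ENNReal.ofReal (Cp * lam ^ (-p) * (volume E).toReal) := ENNReal.ofReal_le_ofReal hreal
      _ = ENNReal.ofReal (Cp * lam ^ (-p)) * ENNReal.ofReal (volume E).toReal :=
          ENNReal.ofReal_mul (by positivity)
      _ = ENNReal.ofReal (Cp * lam ^ (-p)) * volume E := by rw [ENNReal.ofReal_toReal hEfin.ne]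
  · -- large lam: use pos_bound for T and -T
    have hWfin : volume {x | lam < |T E x|} < ⊤ :=
      lt_of_le_of_lt (hweak E hE hEfin lam hlam0) ENNReal.ofReal_lt_top
    have hposfin : volume {x | lam < T E x} < ⊤ := by
      refine lt_of_le_of_lt (measure_mono ?_) hWfin
      intro x hx
      simp only [Set.mem_setOf_eq] at hx ⊢
      exact lt_of_lt_of_le hx (le_abs_self _)
    have hnegfin : volume {x | lam < -(T E x)} < ⊤ := by
      refine lt_of_le_of_lt (measure_mono ?_) hWfin
      intro x hx
      simp only [Set.mem_setOf_eq] at hx ⊢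
      calc lam < -(T E x) := hx
        _ ≤ |T E x| := neg_le_abs _
    have hpos := pos_bound T C hC hmeas hbilin E hE hEfin hEpos lam hcase hposfin
    have hneg := pos_bound (fun E x => -(T E x)) C hC
      (fun E hE => (hmeas E hE).neg)
      (by
        intro E F hE hF hEf hFf h9
        rw [integral_neg, abs_neg]
        exact hbilin E F hE hF hEf hFf h9)
      E hE hEfin hEpos lam hcase hnegfin
    have hsplit : volume {x | lam < |T E x|} ≤
        volume {x | lam < T E x} + volume {x | lam < -(T E x)} := by
      refine le_trans (measure_mono ?_) (measure_union_le _ _)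
      intro x hx
      simp only [Set.mem_setOf_eq, Set.mem_union] at hx ⊢
      exact lt_abs.mp hx
    -- real inequality : 2 * exp (1 - lam / C) ≤ Cp * lam ^ (-p)
    have hrealkey : 2 * Real.exp (1 - lam / C) ≤ Cp * lam ^ (-p) := by
      have hs : (0:ℝ) < lam / ((m : ℝ) * C) := by positivity
      have hmC : (0:ℝ) < (m : ℝ) * C := by positivity
      have hexp1 : lam / ((m : ℝ) * C) ≤ Real.exp (lam / ((m : ℝ) * C)) := by
        have := Real.add_one_le_exp (lam / ((m : ℝ) * C))
        linarith
      have hexp2 : (lam / ((m : ℝ) * C)) ^ m ≤ Real.exp (lam / C) := by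
        have h1 : Real.exp (lam / C) = Real.exp (lam / ((m : ℝ) * C)) ^ m := by
          rw [← Real.exp_nat_mul]
          congr 1
          field_simp
        rw [h1]
        exact pow_le_pow_left₀ hs.le hexp1 m
      have hexp3 : Real.exp (-(lam / C)) ≤ ((m : ℝ) * C / lam) ^ m := by
        rw [Real.exp_neg]
        have hpowpos : (0:ℝ) < (lam / ((m : ℝ) * C)) ^ m := by positivity
        have h2 : ((lam / ((m : ℝ) * C)) ^ m)⁻¹ = ((m : ℝ) * C / lam) ^ m := by
          rw [← inv_pow, inv_div]
        rw [← h2]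
        exact inv_anti₀ hpowpos hexp2
      have hCC' : C ≤ C' := le_max_left _ _
      have hlam1 : (1:ℝ) ≤ lam := hlam.le
      have hpow1 : ((m : ℝ) * C / lam) ^ m ≤ ((m : ℝ) * C') ^ m * (lam ^ m)⁻¹ := by
        rw [div_pow, div_eq_mul_inv]
        gcongr
      have hpow2 : ((lam : ℝ) ^ m)⁻¹ ≤ lam ^ (-p) := by
        have h3 : (lam : ℝ) ^ m = lam ^ ((m : ℝ) : ℝ) := by
          rw [Real.rpow_natCast]
        rw [h3, ← Real.rpow_neg hlam0.le]
        exact Real.rpow_le_rpow_of_exponent_le hlam1 (by linarith)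
      have hCpge : 2 * Real.exp 1 * ((m : ℝ) * C') ^ m ≤ Cp := by
        have h1 : (0:ℝ) < lam₀ ^ p := Real.rpow_pos_of_pos hlam₀pos p
        nlinarith
      have hfinal : 2 * Real.exp (1 - lam / C) ≤
          2 * Real.exp 1 * ((m : ℝ) * C') ^ m * lam ^ (-p) := by
        have h4 : Real.exp (1 - lam / C) = Real.exp 1 * Real.exp (-(lam / C)) := by
          rw [← Real.exp_add]; ring_nf
        rw [h4]
        have h5 : Real.exp (-(lam / C)) ≤ ((m : ℝ) * C') ^ m * lam ^ (-p) := by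
          calc Real.exp (-(lam / C)) ≤ ((m : ℝ) * C / lam) ^ m := hexp3
            _ ≤ ((m : ℝ) * C') ^ m * (lam ^ m)⁻¹ := hpow1
            _ ≤ ((m : ℝ) * C') ^ m * lam ^ (-p) := by
                gcongr
        calc 2 * (Real.exp 1 * Real.exp (-(lam / C)))
            ≤ 2 * (Real.exp 1 * (((m : ℝ) * C') ^ m * lam ^ (-p))) := by
              gcongr
          _ = 2 * Real.exp 1 * ((m : ℝ) * C') ^ m * lam ^ (-p) := by ring
      calc 2 * Real.exp (1 - lam / C)
          ≤ 2 * Real.exp 1 * ((m : ℝ) * C') ^ m * lam ^ (-p) := hfinal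
        _ ≤ Cp * lam ^ (-p) := by gcongr
    calc volume {x | lam < |T E x|}
        ≤ volume {x | lam < T E x} + volume {x | lam < -(T E x)} := hsplit
      _ ≤ ENNReal.ofReal (Real.exp (1 - lam / C)) * volume E +
          ENNReal.ofReal (Real.exp (1 - lam / C)) * volume E := add_le_add hpos hneg
      _ = ENNReal.ofReal (2 * Real.exp (1 - lam / C)) * volume E := by
          rw [← two_mul, ← mul_assoc]
          congr 1
          rw [show ((2:ℝ≥0∞)) = ENNReal.ofReal (2:ℝ) by norm_num, ← ENNReal.ofReal_mul]
          norm_num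
      _ ≤ ENNReal.ofReal (Cp * lam ^ (-p)) * volume E := by
          gcongr
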